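/- (Weight-zero compatibility of the Cartier operator with the p-saturated filtration, from the proof of Lemma lem:CC- in §10.) Let n ≥ 1 and r ≥ 2. If a ∈ W_{n+1}(L) satisfies F(a) ∈ Fil^p_r Wₙ(L), then R(a) ∈ Fil^p_r Wₙ(L). Consequently the Cartier operator C : F(W_{n+1}(L)) → Wₙ(L), defined by C(F(a)) = R(a) (well defined since F(a) = F(b) forces a_i = b_i for 0 ≤ i ≤ n−1 in a field of characteristic p), maps F(W_{n+1}(L)) ∩ Fil^p_r Wₙ(L) into Fil^p_r Wₙ(L). -/

import Mathlib

noncomputable section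

open scoped Classical

/-- A discretely valued field: a field `L` together with a normalized additive valuation
`v : L → ℤ ∪ {∞}` and a uniformizer `z` (so `v z = 1`).  The valuation ring is
`O = {a : L | 0 ≤ v a}`, with maximal ideal `𝔪 = {a : L | 1 ≤ v a}`. -/
structure DVField (L : Type) [Field L] : Type where
  v : L → WithTop ℤ
  z : L
  v_top : ∀ a : L, v a = ⊤ ↔ a = 0
  v_mul : ∀ a b : L, v (a * b) = v a + v b
  v_add : ∀ a b : L, min (v a) (v b) ≤ v (a + b)
  v_z : v z = 1

namespace DVField

variable {L : Type} [Field L]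

/-- `Wₙ(O) ⊆ Wₙ(L)`: the truncated Witt vectors all of whose components are integral. -/
def WO (D : DVField L) (p n : ℕ) : Set (TruncatedWittVector p n L) :=
  {x | ∀ i : Fin n, 0 ≤ D.v (x.coeff i)}

/-- The Brylinski–Kato filtration
`fil^log_r Wₙ(L) = {(a₀, …, a_{n-1}) | p^{n-1-i} · v(aᵢ) ≥ -r for all i}`. -/
def filLog (D : DVField L) (p r n : ℕ) : Set (TruncatedWittVector p n L) :=
  {x | ∀ i : Fin n, (↑(-(r : ℤ)) : WithTop ℤ) ≤ p ^ (n - 1 - (i : ℕ)) • D.v (x.coeff i)}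

end DVField

/-- The Verschiebung `V : Wₙ(L) → W_{n+1}(L)`, shifting components. -/
def wV {p : ℕ} {L : Type} [Field L] {n : ℕ} (x : TruncatedWittVector p n L) :
    TruncatedWittVector p (n + 1) L :=
  TruncatedWittVector.mk p fun i =>
    if h : (i : ℕ) = 0 then 0 else x.coeff ⟨(i : ℕ) - 1, by have := i.isLt; omega⟩

/-- The iterated Verschiebung `V^{n-m} : W_m(L) → Wₙ(L)` (for `m ≤ n`), given by shifting
components by `n - m`. -/
def wVit {p : ℕ} {L : Type} [Field L] {m n : ℕ} (x : TruncatedWittVector p m L) :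
    TruncatedWittVector p n L :=
  TruncatedWittVector.mk p fun i =>
    if h : n - m ≤ (i : ℕ) ∧ (i : ℕ) - (n - m) < m then x.coeff ⟨(i : ℕ) - (n - m), h.2⟩ else 0

/-- The restriction `R : W_{n+1}(L) → Wₙ(L)`, dropping the last component. -/
def wR {p : ℕ} {L : Type} [Field L] {n : ℕ} (x : TruncatedWittVector p (n + 1) L) :
    TruncatedWittVector p n L :=
  TruncatedWittVector.mk p fun i => x.coeff i.castSucc

/-- The iterated restriction `R^{m-n} : W_m(L) → Wₙ(L)` (for `n ≤ m`), keeping the first `n`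
components. -/
def wRes {p : ℕ} {L : Type} [Field L] {m n : ℕ} (x : TruncatedWittVector p m L) :
    TruncatedWittVector p n L :=
  TruncatedWittVector.mk p fun i => if h : (i : ℕ) < m then x.coeff ⟨(i : ℕ), h⟩ else 0

/-- The Frobenius `F : W_{n+1}(L) → Wₙ(L)` in characteristic `p`:
componentwise `p`-th power followed by restriction. -/
def wF {p : ℕ} {L : Type} [Field L] {n : ℕ} (x : TruncatedWittVector p (n + 1) L) :
    TruncatedWittVector p n L :=
  TruncatedWittVector.mk p fun i => x.coeff i.castSucc ^ p

/-- The Teichmüller lift `[a] = (a, 0, …, 0)`. -/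
def wT (p : ℕ) {L : Type} [Field L] (n : ℕ) (a : L) : TruncatedWittVector p n L :=
  TruncatedWittVector.mk p fun i => if (i : ℕ) = 0 then a else 0

/-- The map `p̲ : Wₙ(L) → W_{n+1}(L)`: lift to length `n+1` (by appending a zero component)
and multiply by `p`. -/
def wP {p : ℕ} [Fact p.Prime] {L : Type} [Field L] {n : ℕ} (x : TruncatedWittVector p n L) :
    TruncatedWittVector p (n + 1) L :=
  p • (wRes x : TruncatedWittVector p (n + 1) L)

namespace DVField

variable {L : Type} [Field L]

/-- The Kato–Matsuda filtration
`fil_r Wₙ(L) = fil^log_{r-1} Wₙ(L) + V^{n-m}(fil^log_r W_m(L))` where `m = min(v_p(r), n)`,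
and `fil_0 Wₙ(L) = Wₙ(O)`. -/
def filKM (D : DVField L) (p : ℕ) [Fact p.Prime] (r n : ℕ) :
    Set (TruncatedWittVector p n L) :=
  if r = 0 then D.WO p n
  else {x | ∃ a ∈ D.filLog p (r - 1) n,
    ∃ b ∈ D.filLog p r (min (padicValNat p r) n), x = a + wVit b}

/-- The `p`-saturation `Fil^p_r Wₙ(L) = Σ_{s=0}^{n-1} p^s · fil_{r·p^s} Wₙ(L)`. -/
def FilP (D : DVField L) (p : ℕ) [Fact p.Prime] (r n : ℕ) :
    Set (TruncatedWittVector p n L) :=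
  {x | ∃ f : Fin n → TruncatedWittVector p n L,
      (∀ s : Fin n, f s ∈ D.filKM p (r * p ^ (s : ℕ)) n) ∧
      x = ∑ s : Fin n, p ^ (s : ℕ) • f s}

end DVField


/-! ### Auxiliary lemmas: arithmetic in `WithTop ℤ` -/

theorem nsmul_coe_aux (n : ℕ) (a : ℤ) : n • (a : WithTop ℤ) = ((n * a : ℤ) : WithTop ℤ) := by
  induction n with
  | zero => simp
  | succ k ih =>
      rw [succ_nsmul, ih, ← WithTop.coe_add]
      congr 1; push_cast; ring

theorem nsmul_top_aux (n : ℕ) (h : n ≠ 0) : n • (⊤ : WithTop ℤ) = ⊤ := by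
  cases n with
  | zero => omega
  | succ k => rw [succ_nsmul]; simp

theorem bound_top (c N : ℕ) : ((-(c:ℤ) : ℤ) : WithTop ℤ) ≤ N • (⊤ : WithTop ℤ) := by
  rcases Nat.eq_zero_or_pos N with h | h
  · subst h; rw [zero_smul]
    exact_mod_cast (by omega : -(c:ℤ) ≤ 0)
  · rw [nsmul_top_aux N (by omega)]; exact le_top

theorem bound_mul_iff (c N k : ℕ) (hk : k ≠ 0) (a : WithTop ℤ) :
    ((-((c*k : ℕ):ℤ) : ℤ) : WithTop ℤ) ≤ (N*k) • a ↔ ((-(c:ℤ) : ℤ) : WithTop ℤ) ≤ N • a := by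
  cases a with
  | top => exact iff_of_true (bound_top _ _) (bound_top _ _)
  | coe a =>
      rw [nsmul_coe_aux, nsmul_coe_aux, WithTop.coe_le_coe, WithTop.coe_le_coe]
      have hk' : (1:ℤ) ≤ (k:ℤ) := by exact_mod_cast Nat.one_le_iff_ne_zero.2 hk
      push_cast
      constructor
      · intro h; by_contra hc; push_neg at hc
        have h2 : (N:ℤ) * a ≤ -c - 1 := by omega
        have h3 := mul_le_mul_of_nonneg_right h2 (by positivity : (0:ℤ) ≤ (k:ℤ))
        nlinarith
      · intro h
        have h3 := mul_le_mul_of_nonneg_right h (by positivity : (0:ℤ) ≤ (k:ℤ))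
        nlinarith

theorem bound_div (c N k : ℕ) (hk : k ≠ 0) (a : WithTop ℤ)
    (h : ((-(c:ℤ) : ℤ) : WithTop ℤ) ≤ (N*k) • a) :
    ((-((c/k : ℕ):ℤ) : ℤ) : WithTop ℤ) ≤ N • a := by
  cases a with
  | top => exact bound_top _ _
  | coe a =>
      rw [nsmul_coe_aux, WithTop.coe_le_coe] at h ⊢
      push_cast at h ⊢
      have h1' : (k:ℤ) * ((c/k : ℕ):ℤ) + ((c % k : ℕ):ℤ) = c := by
        exact_mod_cast Nat.div_add_mod c k
      have h2' : ((c % k : ℕ):ℤ) < k := by exact_mod_cast Nat.mod_lt _ (by omega : 0 < k)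
      have hk' : (1:ℤ) ≤ (k:ℤ) := by exact_mod_cast Nat.one_le_iff_ne_zero.2 hk
      by_contra hc; push_neg at hc
      have h2 : (N:ℤ) * a ≤ -((c/k : ℕ):ℤ) - 1 := by omega
      have h3 := mul_le_mul_of_nonneg_right h2 (by positivity : (0:ℤ) ≤ (k:ℤ))
      nlinarith

theorem bound_mono (c c' N : ℕ) (hcc : c ≤ c') (a : WithTop ℤ)
    (h : ((-(c:ℤ) : ℤ) : WithTop ℤ) ≤ N • a) : ((-(c':ℤ) : ℤ) : WithTop ℤ) ≤ N • a :=
  le_trans (by exact_mod_cast (by omega : -(c':ℤ) ≤ -(c:ℤ))) h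

/-! ### Auxiliary lemmas: basic valuation facts -/

namespace DVField
variable {L : Type} [Field L] (D : DVField L)

theorem v_zero : D.v 0 = ⊤ := (D.v_top 0).2 rfl

theorem v_one : D.v 1 = 0 := by
  have h := D.v_mul 1 1
  rw [one_mul] at h
  have h1 : D.v 1 ≠ ⊤ := fun ht => one_ne_zero ((D.v_top 1).1 ht)
  cases hv : D.v 1 with
  | top => exact absurd hv h1
  | coe a =>
      rw [hv, ← WithTop.coe_add] at h
      have : a = a + a := WithTop.coe_injective h
      have : a = 0 := by omega
      simp [this]

theorem v_neg (x : L) : D.v (-x) = D.v x := by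
  have hm1 : D.v (-1) = 0 := by
    have h := D.v_mul (-1) (-1)
    rw [neg_mul_neg, one_mul, D.v_one] at h
    cases hv : D.v (-1) with
    | top => rw [hv] at h; simp at h
    | coe a =>
        rw [hv, ← WithTop.coe_add] at h
        have : (0:ℤ) = a + a := WithTop.coe_injective h
        have : a = 0 := by omega
        simp [this]
  calc D.v (-x) = D.v ((-1) * x) := by ring_nf
    _ = D.v (-1) + D.v x := D.v_mul _ _
    _ = D.v x := by rw [hm1, zero_add]

theorem v_pow (x : L) (k : ℕ) : D.v (x ^ k) = k • D.v x := by
  induction k with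
  | zero => simp [D.v_one]
  | succ m ih => rw [pow_succ, D.v_mul, ih, succ_nsmul]

theorem bound_vadd (c N : ℕ) (a b : L)
    (ha : ((-(c:ℤ) : ℤ) : WithTop ℤ) ≤ N • D.v a)
    (hb : ((-(c:ℤ) : ℤ) : WithTop ℤ) ≤ N • D.v b) :
    ((-(c:ℤ) : ℤ) : WithTop ℤ) ≤ N • D.v (a + b) := by
  have hmin : min (D.v a) (D.v b) ≤ D.v (a + b) := D.v_add _ _
  rcases min_cases (D.v a) (D.v b) with ⟨heq, _⟩ | ⟨heq, _⟩
  · exact le_trans ha (nsmul_le_nsmul_right (heq ▸ hmin) N)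
  · exact le_trans hb (nsmul_le_nsmul_right (heq ▸ hmin) N)

theorem bound_vsum {ι : Type*} (c N : ℕ) (s : Finset ι) (g : ι → L)
    (h : ∀ i ∈ s, ((-(c:ℤ) : ℤ) : WithTop ℤ) ≤ N • D.v (g i)) :
    ((-(c:ℤ) : ℤ) : WithTop ℤ) ≤ N • D.v (∑ i ∈ s, g i) := by
  classical
  induction s using Finset.cons_induction with
  | empty => rw [Finset.sum_empty, D.v_zero]; exact bound_top _ _
  | cons a s ha ih =>
      rw [Finset.sum_cons]
      exact D.bound_vadd _ _ _ _ (h a (Finset.mem_cons_self _ _))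
        (ih fun i hi => h i (Finset.mem_cons.2 (Or.inr hi)))

end DVField

/-! ### Teichmüller scaling on Witt vectors -/

namespace WittVector
open MvPolynomial
variable (p : ℕ) [hp : Fact p.Prime] {R S : Type*} [CommRing R] [CommRing S]

/-- Multiplication by a Teichmüller lift acts componentwise. -/
def tscale (u : R) (x : WittVector p R) : WittVector p R := ⟨fun i => u ^ p ^ i * x.coeff i⟩

@[simp] theorem tscale_coeff (u : R) (x : WittVector p R) (i : ℕ) :
    (tscale p u x).coeff i = u ^ p ^ i * x.coeff i := rfl

theorem map_tscale (f : R →+* S) (u : R) (x : WittVector p R) :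
    map f (tscale p u x) = tscale p (f u) (map f x) := by
  ext i; simp [map_coeff]

theorem ghostComponent_tscale (u : R) (x : WittVector p R) (n : ℕ) :
    ghostComponent n (tscale p u x) = u ^ p ^ n * ghostComponent n x := by
  rw [ghostComponent_apply, ghostComponent_apply, aeval_wittPolynomial, aeval_wittPolynomial,
    Finset.mul_sum]
  refine Finset.sum_congr rfl fun i hi => ?_
  rw [Finset.mem_range] at hi
  rw [tscale_coeff, mul_pow, ← pow_mul,
    show p ^ i * p ^ (n - i) = p ^ n from by rw [← pow_add]; congr 1; omega]
  ring

private theorem teich_mul_aux1 {R : Type*} (u : MvPolynomial R ℚ)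
    (x : WittVector p (MvPolynomial R ℚ)) :
    teichmuller p u * x = tscale p u x := by
  apply (ghostMap.bijective_of_invertible p (MvPolynomial R ℚ)).1
  ext1 n
  rw [RingHom.map_mul]
  simp only [Pi.mul_apply, ghostMap_apply, ghostComponent_tscale, ghostComponent_teichmuller]

private theorem teich_mul_aux2 {R : Type*} (u : MvPolynomial R ℤ)
    (x : WittVector p (MvPolynomial R ℤ)) :
    teichmuller p u * x = tscale p u x := by
  refine map_injective (MvPolynomial.map (Int.castRingHom ℚ))
    (MvPolynomial.map_injective _ Int.cast_injective) ?_
  rw [RingHom.map_mul, map_teichmuller, map_tscale, teich_mul_aux1]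

theorem teichmuller_mul_eq_tscale (u : R) (x : WittVector p R) :
    teichmuller p u * x = tscale p u x := by
  set u' : MvPolynomial R ℤ := X u with hu'
  set x' : WittVector p (MvPolynomial R ℤ) := ⟨fun i => X (x.coeff i)⟩ with hx'
  have h1 : MvPolynomial.counit R u' = u := counit_X u
  have h2 : map (MvPolynomial.counit R) x' = x := by
    ext i; rw [map_coeff]; exact counit_X _
  calc teichmuller p u * x
      = map (MvPolynomial.counit R) (teichmuller p u' * x') := by
        rw [RingHom.map_mul, map_teichmuller, h1, h2]
    _ = map (MvPolynomial.counit R) (tscale p u' x') := by rw [teich_mul_aux2]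
    _ = tscale p u x := by rw [map_tscale, h1, h2]

/-- The subring of Witt vectors with all coefficients in a subring. -/
def coeffSubring {A : Type*} [CommRing A] (B : Subring A) : Subring (WittVector p A) :=
  (WittVector.map B.subtype).range

theorem mem_coeffSubring {A : Type*} [CommRing A] (B : Subring A) (x : WittVector p A) :
    x ∈ coeffSubring p B ↔ ∀ i, x.coeff i ∈ B := by
  constructor
  · rintro ⟨y, rfl⟩ i
    rw [map_coeff]
    exact SetLike.coe_mem _
  · intro h
    exact ⟨⟨fun i => ⟨x.coeff i, h i⟩⟩, by ext i; rw [map_coeff]; rfl⟩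

end WittVector

/-! ### The key additivity lemma for valuation bounds on Witt coordinates -/

namespace DVField
variable {p : ℕ} [hp : Fact p.Prime] {L : Type} [Field L] (D : DVField L)

/-- Gauss-type integral polynomials. -/
def polB (N : ℕ) : Subring (Polynomial L) where
  carrier := {f | ∀ k : ℕ, ((-(k:ℤ) : ℤ) : WithTop ℤ) ≤ N • D.v (f.coeff k)}
  zero_mem' := fun k => by rw [Polynomial.coeff_zero, D.v_zero]; exact bound_top _ _
  one_mem' := fun k => by
    rw [Polynomial.coeff_one]
    split_ifs with h
    · rw [D.v_one, smul_zero]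
      exact_mod_cast (by omega : -(k:ℤ) ≤ 0)
    · rw [D.v_zero]; exact bound_top _ _
  add_mem' := fun {f g} hf hg k => by
    rw [Polynomial.coeff_add]
    exact D.bound_vadd _ _ _ _ (hf k) (hg k)
  neg_mem' := fun {f} hf k => by
    rw [Polynomial.coeff_neg, D.v_neg]; exact hf k
  mul_mem' := fun {f g} hf hg k => by
    rw [Polynomial.coeff_mul]
    refine D.bound_vsum _ _ _ _ fun x hx => ?_
    have hxk : x.1 + x.2 = k := Finset.HasAntidiagonal.mem_antidiagonal.1 hx
    calc ((-(k:ℤ) : ℤ) : WithTop ℤ)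
        = ((-(x.1:ℤ) : ℤ) : WithTop ℤ) + ((-(x.2:ℤ) : ℤ) : WithTop ℤ) := by
          rw [← WithTop.coe_add]; congr 1; omega
      _ ≤ N • D.v (f.coeff x.1) + N • D.v (g.coeff x.2) := add_le_add (hf x.1) (hg x.2)
      _ = N • (D.v (f.coeff x.1) + D.v (g.coeff x.2)) := (smul_add _ _ _).symm
      _ = N • D.v (f.coeff x.1 * g.coeff x.2) := by rw [D.v_mul]

theorem mem_polB (N : ℕ) (f : Polynomial L) :
    f ∈ D.polB N ↔ ∀ k : ℕ, ((-(k:ℤ) : ℤ) : WithTop ℤ) ≤ N • D.v (f.coeff k) := Iff.rfl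

theorem key_mem (N c : ℕ) (X : WittVector p L)
    (hX : ∀ j, ((-((c * p^j : ℕ) : ℤ) : ℤ) : WithTop ℤ) ≤ N • D.v (X.coeff j)) :
    WittVector.teichmuller p ((Polynomial.X : Polynomial L)^c) *
      WittVector.map (Polynomial.C) X ∈ WittVector.coeffSubring p (D.polB N) := by
  rw [WittVector.mem_coeffSubring]
  intro i
  rw [WittVector.teichmuller_mul_eq_tscale, WittVector.tscale_coeff, WittVector.map_coeff,
    ← pow_mul, mul_comm, Polynomial.C_mul_X_pow_eq_monomial, mem_polB]
  intro k
  rw [Polynomial.coeff_monomial]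
  split_ifs with h
  · rw [← h]; exact hX i
  · rw [D.v_zero]; exact bound_top _ _

theorem key_add (N c : ℕ) (X Y : WittVector p L)
    (hX : ∀ j, ((-((c * p^j : ℕ) : ℤ) : ℤ) : WithTop ℤ) ≤ N • D.v (X.coeff j))
    (hY : ∀ j, ((-((c * p^j : ℕ) : ℤ) : ℤ) : WithTop ℤ) ≤ N • D.v (Y.coeff j)) :
    ∀ j, ((-((c * p^j : ℕ) : ℤ) : ℤ) : WithTop ℤ) ≤ N • D.v ((X + Y).coeff j) := by
  have h1 := add_mem (D.key_mem N c X hX) (D.key_mem N c Y hY)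
  rw [← mul_add, ← RingHom.map_add] at h1
  intro j
  rw [WittVector.mem_coeffSubring] at h1
  have h2 := h1 j
  rw [WittVector.teichmuller_mul_eq_tscale, WittVector.tscale_coeff, WittVector.map_coeff,
    ← pow_mul, mul_comm, Polynomial.C_mul_X_pow_eq_monomial, mem_polB] at h2
  have h3 := h2 (c * p ^ j)
  rw [Polynomial.coeff_monomial, if_pos rfl] at h3
  exact h3

end DVField


/-! ### Truncated Witt vector operator identities -/

section Ops
variable {p : ℕ} [hp : Fact p.Prime] {L : Type} [Field L]

theorem iterV_coeff (k : ℕ) (X : WittVector p L) (i : ℕ) :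
    ((WittVector.verschiebung)^[k] X).coeff i = if k ≤ i then X.coeff (i - k) else 0 := by
  induction k generalizing i with
  | zero => simp
  | succ k ih =>
      rw [Function.iterate_succ_apply']
      cases i with
      | zero => rw [WittVector.verschiebung_coeff_zero, if_neg (by omega)]
      | succ i =>
          rw [WittVector.verschiebung_coeff_succ, ih]
          by_cases h : k ≤ i
          · rw [if_pos h, if_pos (by omega), Nat.succ_sub_succ]
          · rw [if_neg h, if_neg (by omega)]

theorem iterV_add (k : ℕ) (X Y : WittVector p L) :
    (WittVector.verschiebung)^[k] (X + Y) =
      (WittVector.verschiebung)^[k] X + (WittVector.verschiebung)^[k] Y := by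
  induction k with
  | zero => rfl
  | succ k ih => rw [Function.iterate_succ_apply', ih, map_add, Function.iterate_succ_apply',
      Function.iterate_succ_apply']

theorem wR_truncate {n : ℕ} (X : WittVector p L) :
    wR (WittVector.truncate (n+1) X) = WittVector.truncate n X := by
  apply TruncatedWittVector.ext; intro i
  rw [wR, TruncatedWittVector.coeff_mk, WittVector.coeff_truncate, WittVector.coeff_truncate,
    Fin.coe_castSucc]

theorem wV_truncate {n : ℕ} (X : WittVector p L) :
    wV (WittVector.truncate n X) = WittVector.truncate (n+1) (WittVector.verschiebung X) := by
  apply TruncatedWittVector.ext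
  rintro ⟨iv, hiv⟩
  rw [wV, TruncatedWittVector.coeff_mk, WittVector.coeff_truncate]
  cases iv with
  | zero => rw [dif_pos rfl]; exact (WittVector.verschiebung_coeff_zero X).symm
  | succ j =>
      rw [dif_neg (Nat.succ_ne_zero j), WittVector.coeff_truncate]
      exact (WittVector.verschiebung_coeff_succ X j).symm

theorem wVit_truncate {m n : ℕ} (hmn : m ≤ n) (X : WittVector p L) :
    (wVit (WittVector.truncate m X) : TruncatedWittVector p n L) =
      WittVector.truncate n ((WittVector.verschiebung)^[n-m] X) := by
  apply TruncatedWittVector.ext; intro i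
  have hi := i.isLt
  rw [wVit, TruncatedWittVector.coeff_mk, WittVector.coeff_truncate, iterV_coeff]
  split_ifs with h1 h2
  · rw [WittVector.coeff_truncate]
  · omega
  · omega
  · rfl

theorem wF_truncate [CharP L p] {n : ℕ} (X : WittVector p L) :
    wF (WittVector.truncate (n+1) X) =
      WittVector.truncate n (WittVector.map (_root_.frobenius L p) X) := by
  apply TruncatedWittVector.ext; intro i
  rw [wF, TruncatedWittVector.coeff_mk, WittVector.coeff_truncate, WittVector.coeff_truncate,
    WittVector.map_coeff, Fin.coe_castSucc, frobenius_def]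

theorem wR_add {n : ℕ} (x y : TruncatedWittVector p (n+1) L) : wR (x + y) = wR x + wR y := by
  obtain ⟨X, rfl⟩ := WittVector.truncate_surjective p (n+1) L x
  obtain ⟨Y, rfl⟩ := WittVector.truncate_surjective p (n+1) L y
  rw [← map_add, wR_truncate, wR_truncate, wR_truncate, map_add]

theorem wR_nsmul {n : ℕ} (k : ℕ) (x : TruncatedWittVector p (n+1) L) :
    wR (k • x) = k • wR x := by
  obtain ⟨X, rfl⟩ := WittVector.truncate_surjective p (n+1) L x
  rw [← map_nsmul, wR_truncate, wR_truncate, map_nsmul]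

theorem wV_add {n : ℕ} (x y : TruncatedWittVector p n L) : wV (x + y) = wV x + wV y := by
  obtain ⟨X, rfl⟩ := WittVector.truncate_surjective p n L x
  obtain ⟨Y, rfl⟩ := WittVector.truncate_surjective p n L y
  rw [← map_add, wV_truncate, wV_truncate, wV_truncate, map_add, map_add]

theorem wV_nsmul {n : ℕ} (k : ℕ) (x : TruncatedWittVector p n L) : wV (k • x) = k • wV x := by
  obtain ⟨X, rfl⟩ := WittVector.truncate_surjective p n L x
  rw [← map_nsmul, wV_truncate, wV_truncate, map_nsmul (WittVector.verschiebung),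
    map_nsmul (WittVector.truncate (n+1))]

theorem wVit_add {m n : ℕ} (hmn : m ≤ n) (x y : TruncatedWittVector p m L) :
    (wVit (x + y) : TruncatedWittVector p n L) = wVit x + wVit y := by
  obtain ⟨X, rfl⟩ := WittVector.truncate_surjective p m L x
  obtain ⟨Y, rfl⟩ := WittVector.truncate_surjective p m L y
  rw [← map_add, wVit_truncate hmn, wVit_truncate hmn, wVit_truncate hmn, iterV_add, map_add]

theorem wVit_zero {m n : ℕ} : (wVit (0 : TruncatedWittVector p m L) : TruncatedWittVector p n L) = 0 := by
  apply TruncatedWittVector.ext; intro i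
  rw [wVit, TruncatedWittVector.coeff_mk, TruncatedWittVector.coeff_zero]
  split_ifs with h
  · rw [TruncatedWittVector.coeff_zero]
  · rfl

theorem wF_sub [CharP L p] {n : ℕ} (x y : TruncatedWittVector p (n+1) L) :
    wF (x - y) = wF x - wF y := by
  obtain ⟨X, rfl⟩ := WittVector.truncate_surjective p (n+1) L x
  obtain ⟨Y, rfl⟩ := WittVector.truncate_surjective p (n+1) L y
  rw [← map_sub, wF_truncate, wF_truncate, wF_truncate, map_sub, map_sub]

theorem wF_wV [CharP L p] {n : ℕ} (h : TruncatedWittVector p n L) :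
    wF (wV h) = p • h := by
  obtain ⟨X, rfl⟩ := WittVector.truncate_surjective p n L h
  rw [wV_truncate, wF_truncate, ← WittVector.frobenius_eq_map_frobenius,
    WittVector.frobenius_verschiebung, map_mul, map_natCast, nsmul_eq_mul, mul_comm]

end Ops


/-! ### Filtration lemmas -/

namespace DVField
variable {p : ℕ} [hp : Fact p.Prime] {L : Type} [Field L] (D : DVField L)

theorem out_coeff_ge {n : ℕ} (x : TruncatedWittVector p n L) {j : ℕ} (h : n ≤ j) :
    x.out.coeff j = 0 := by simp [TruncatedWittVector.out, not_lt.2 h]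

theorem filLog_out_bound {c n : ℕ} {x : TruncatedWittVector p n L}
    (hx : x ∈ D.filLog p c n) (j : ℕ) :
    ((-((c * p^j : ℕ) : ℤ) : ℤ) : WithTop ℤ) ≤ (p^(n-1)) • D.v (x.out.coeff j) := by
  by_cases hj : j < n
  · have h1 := hx ⟨j, hj⟩
    rw [show x.out.coeff j = TruncatedWittVector.coeff ⟨j, hj⟩ x from
      TruncatedWittVector.coeff_out x ⟨j, hj⟩]
    have h2 := (bound_mul_iff c (p^(n-1-j)) (p^j) (pow_ne_zero _ hp.1.ne_zero) _).2 h1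
    rwa [← pow_add, show n-1-j+j = n-1 from by omega] at h2
  · rw [out_coeff_ge x (by omega), D.v_zero]; exact bound_top _ _

theorem filLog_add {c n : ℕ} {x y : TruncatedWittVector p n L}
    (hx : x ∈ D.filLog p c n) (hy : y ∈ D.filLog p c n) : x + y ∈ D.filLog p c n := by
  intro i
  have hi := i.isLt
  have hkey := D.key_add (p^(n-1)) c x.out y.out (D.filLog_out_bound hx) (D.filLog_out_bound hy)
    (i : ℕ)
  rw [show n-1 = (n-1-(i:ℕ)) + (i:ℕ) from by omega, pow_add] at hkey
  have heq : x + y = WittVector.truncateFun n (x.out + y.out) := by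
    rw [WittVector.truncateFun_add, TruncatedWittVector.truncateFun_out,
      TruncatedWittVector.truncateFun_out]
  rw [heq, WittVector.coeff_truncateFun]
  exact (bound_mul_iff c (p^(n-1-(i:ℕ))) (p^(i:ℕ)) (pow_ne_zero _ hp.1.ne_zero) _).1 hkey

theorem filLog_zero (c n : ℕ) : (0 : TruncatedWittVector p n L) ∈ D.filLog p c n := by
  intro i
  rw [TruncatedWittVector.coeff_zero, D.v_zero]
  exact bound_top _ _

theorem filLog_mono {c c' n : ℕ} (hcc : c ≤ c') {x : TruncatedWittVector p n L}
    (hx : x ∈ D.filLog p c n) : x ∈ D.filLog p c' n :=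
  fun i => bound_mono c c' _ hcc _ (hx i)

theorem filLog_wVit {c m n : ℕ} (hmn : m ≤ n) {b : TruncatedWittVector p m L}
    (hb : b ∈ D.filLog p c m) : (wVit b : TruncatedWittVector p n L) ∈ D.filLog p c n := by
  intro i
  have hi := i.isLt
  rw [wVit, TruncatedWittVector.coeff_mk]
  split_ifs with h
  · have h2 := hb ⟨(i:ℕ) - (n - m), h.2⟩
    rwa [show m - 1 - ((i:ℕ) - (n - m)) = n - 1 - (i:ℕ) from by omega] at h2
  · rw [D.v_zero]; exact bound_top _ _

theorem filKM_subset_filLog {r' n : ℕ} (hr0 : r' ≠ 0) :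
    D.filKM p r' n ⊆ D.filLog p r' n := by
  intro x hx
  rw [DVField.filKM, if_neg hr0] at hx
  obtain ⟨a, ha, b, hb, rfl⟩ := hx
  exact D.filLog_add (D.filLog_mono (by omega) ha) (D.filLog_wVit (min_le_right _ _) hb)

theorem filKM_zero_mem {r' n : ℕ} (hr0 : r' ≠ 0) :
    (0 : TruncatedWittVector p n L) ∈ D.filKM p r' n := by
  rw [DVField.filKM, if_neg hr0]
  exact ⟨0, D.filLog_zero _ _, 0, D.filLog_zero _ _, by rw [wVit_zero, add_zero]⟩

theorem filKM_add {r' n : ℕ} (hr0 : r' ≠ 0) {x y : TruncatedWittVector p n L}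
    (hx : x ∈ D.filKM p r' n) (hy : y ∈ D.filKM p r' n) : x + y ∈ D.filKM p r' n := by
  rw [DVField.filKM, if_neg hr0] at hx hy ⊢
  obtain ⟨a1, ha1, b1, hb1, rfl⟩ := hx
  obtain ⟨a2, ha2, b2, hb2, rfl⟩ := hy
  refine ⟨a1 + a2, D.filLog_add ha1 ha2, b1 + b2, D.filLog_add hb1 hb2, ?_⟩
  rw [wVit_add (min_le_right _ _)]
  ring

end DVField

/-! ### Small natural-number division facts -/

theorem nat_div_aux (A k : ℕ) (hA : 1 ≤ A) (hk : 1 ≤ k) : (A * k - 1) / k = A - 1 := by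
  have e1 : (A-1) * k = A * k - k := by rw [Nat.sub_mul, one_mul]
  have e2 : k ≤ A * k := Nat.le_mul_of_pos_left k (by omega)
  have h1 : A * k - 1 = (k - 1) + (A-1) * k := by omega
  rw [h1, Nat.add_mul_div_right _ _ (by omega : 0 < k), Nat.div_eq_of_lt (by omega), zero_add]

/-! ### The two main steps -/

namespace DVField
variable {p : ℕ} [hp : Fact p.Prime] {L : Type} [Field L] (D : DVField L)

theorem main0 [CharP L p] {n r : ℕ} (hr : 2 ≤ r) (b : TruncatedWittVector p (n+1) L)
    (hb : wF b ∈ D.filKM p r n) : wR b ∈ D.filKM p r n := by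
  have hp2 : 2 ≤ p := hp.1.two_le
  have hr0 : r ≠ 0 := by omega
  have hlog : wF b ∈ D.filLog p r n := D.filKM_subset_filLog hr0 hb
  rw [DVField.filKM, if_neg hr0]
  refine ⟨wR b, ?_, 0, D.filLog_zero _ _, by rw [wVit_zero, add_zero]⟩
  intro i
  have h1 := hlog i
  rw [wF, TruncatedWittVector.coeff_mk, D.v_pow, ← mul_smul] at h1
  have h2 := bound_div r (p^(n-1-(i:ℕ))) p hp.1.ne_zero _ h1
  rw [wR, TruncatedWittVector.coeff_mk]
  refine bound_mono _ _ _ ?_ _ h2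
  have h3 : r / p ≤ r / 2 := Nat.div_le_div_left hp2 (by omega)
  omega

theorem mainS [CharP L p] {n : ℕ} (hn : 1 ≤ n) {r : ℕ} (hr : 2 ≤ r) (s : ℕ)
    (f : TruncatedWittVector p n L) (hf : f ∈ D.filKM p (r * p ^ (s+1)) n) :
    wR (wV f) ∈ D.filKM p (r * p ^ s) n := by
  have hp2 : 2 ≤ p := hp.1.two_le
  have hppos : 0 < p ^ s := pow_pos (by omega) s
  have hppos1 : 0 < p ^ (s+1) := pow_pos (by omega) (s+1)
  have hrp1 : r * p^(s+1) ≠ 0 := by positivity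
  have hrp0 : r * p^s ≠ 0 := by positivity
  set m := min (padicValNat p (r * p^(s+1))) n with hm
  set m' := min (padicValNat p (r * p^s)) n with hm'
  rw [DVField.filKM, if_neg hrp1] at hf
  obtain ⟨a, ha, b, hb, rfl⟩ := hf
  rw [DVField.filKM, if_neg hrp0]
  have hval : padicValNat p (r * p^(s+1)) = padicValNat p r + (s+1) := by
    rw [padicValNat.mul (by omega) (pow_ne_zero _ (by omega)), padicValNat.prime_pow]
  have hval' : padicValNat p (r * p^s) = padicValNat p r + s := by
    rw [padicValNat.mul (by omega) (pow_ne_zero _ (by omega)), padicValNat.prime_pow]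
  have hfacts : 1 ≤ m ∧ m ≤ n ∧ m' ≤ n ∧ m - 1 ≤ m' := by
    rw [hm, hm', hval, hval']; omega
  -- the divided bounds
  have hdiv1 : (r * p^(s+1) - 1) / p = r * p^s - 1 := by
    rw [show r * p^(s+1) = (r * p^s) * p from by ring, nat_div_aux _ _ (Nat.one_le_iff_ne_zero.2 hrp0) (by omega)]
  have hdiv2 : (r * p^(s+1)) / p = r * p^s := by
    rw [show r * p^(s+1) = (r * p^s) * p from by ring, Nat.mul_div_cancel _ (by omega)]
  -- component 1 : `wR (wV a)`
  have hRVa : wR (wV a) ∈ D.filLog p (r * p^s - 1) n := by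
    intro i
    have hi := i.isLt
    rw [wR, TruncatedWittVector.coeff_mk, wV, TruncatedWittVector.coeff_mk]
    split_ifs with h0
    · rw [D.v_zero]; exact bound_top _ _
    · have hc : (0:ℕ) < (i.castSucc : ℕ) := by
        rcases Nat.eq_zero_or_pos (i.castSucc : ℕ) with hh | hh
        · exact absurd hh h0
        · exact hh
      have h1 := ha ⟨(i.castSucc : ℕ) - 1, by have := Fin.coe_castSucc i; omega⟩
      rw [show p ^ (n - 1 - ((i.castSucc:ℕ) - 1)) = p ^ (n - 1 - (i.castSucc:ℕ)) * p from by
          rw [← pow_succ]; congr 1; have := Fin.coe_castSucc i; omega] at h1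
      have h2 := bound_div _ _ p hp.1.ne_zero _ h1
      rw [hdiv1] at h2
      exact h2
  -- component 2 : `wR (wV (wVit b))`
  have key2 : wR (wV (wVit b)) =
      (wVit ((wVit (wRes b : TruncatedWittVector p (m-1) L)) : TruncatedWittVector p m' L) :
        TruncatedWittVector p n L) := by
    apply TruncatedWittVector.ext; intro i
    have hi := i.isLt
    simp only [wR, wV, wVit, wRes, TruncatedWittVector.coeff_mk, Fin.coe_castSucc]
    split_ifs <;>
      first
        | rfl
        | (exfalso; omega)
        | (congr 1; exact Fin.ext (by simp; omega))
  have hγ : ((wVit (wRes b : TruncatedWittVector p (m-1) L)) : TruncatedWittVector p m' L)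
      ∈ D.filLog p (r * p^s) m' := by
    intro j
    have hj := j.isLt
    simp only [wVit, wRes, TruncatedWittVector.coeff_mk]
    split_ifs with h1 h2
    · have h3 := hb ⟨(j:ℕ) - (m' - (m-1)), by omega⟩
      rw [show p ^ (m - 1 - ((j:ℕ) - (m' - (m-1)))) = p ^ (m' - 1 - (j:ℕ)) * p from by
          rw [← pow_succ]; congr 1; omega] at h3
      have h4 := bound_div _ _ p hp.1.ne_zero _ h3
      rw [hdiv2] at h4
      exact h4
    · rw [D.v_zero]; exact bound_top _ _
    · rw [D.v_zero]; exact bound_top _ _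
  refine ⟨wR (wV a), hRVa, _, hγ, ?_⟩
  rw [wV_add, wR_add, key2]

end DVField

/-- (Weight-zero compatibility of the Cartier operator with the
`p`-saturated filtration.)  Let `n ≥ 1` and `r ≥ 2`.  If `a ∈ W_{n+1}(L)` satisfies
`F(a) ∈ Fil^p_r Wₙ(L)`, then `R(a) ∈ Fil^p_r Wₙ(L)`.  Consequently the Cartier operator
`C : F(W_{n+1}(L)) → Wₙ(L)`, `C(F(a)) = R(a)` (well defined, since `F a = F b` forces
`R a = R b` in a field of characteristic `p`), maps `F(W_{n+1}(L)) ∩ Fil^p_r Wₙ(L)` into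
`Fil^p_r Wₙ(L)`. -/
theorem statement18 (p : ℕ) [Fact p.Prime] (L : Type) [Field L] [CharP L p]
    (D : DVField L) (n r : ℕ) (hn : 1 ≤ n) (hr : 2 ≤ r) :
    (∀ a : TruncatedWittVector p (n + 1) L, wF a ∈ D.FilP p r n → wR a ∈ D.FilP p r n) ∧
    (∀ a b : TruncatedWittVector p (n + 1) L, wF a = wF b → wR a = wR b) := by
  have hp2 : 2 ≤ p := (Fact.out : p.Prime).two_le
  obtain ⟨n', rfl⟩ : ∃ n', n = n' + 1 := ⟨n - 1, by omega⟩
  constructor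
  · intro a ha
    obtain ⟨f, hf, hfa⟩ := ha
    set h : TruncatedWittVector p (n'+1) L :=
      ∑ s : Fin (n'+1), (if 1 ≤ (s:ℕ) then p^((s:ℕ)-1) • f s else 0) with hh
    have hph : p • h = ∑ s : Fin (n'+1), (if 1 ≤ (s:ℕ) then p^(s:ℕ) • f s else 0) := by
      rw [hh, Finset.smul_sum]
      refine Finset.sum_congr rfl fun s _ => ?_
      split_ifs with hs
      · rw [smul_smul, show p * p^((s:ℕ)-1) = p^(s:ℕ) from by
          rw [← pow_succ']; congr 1; omega]
      · rw [smul_zero]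
    set b := a - wV h with hb
    have hab : a = b + wV h := by rw [hb]; ring
    have hFb : wF b = f 0 := by
      rw [hb, wF_sub, wF_wV, hfa, hph, ← Finset.sum_sub_distrib,
        Finset.sum_eq_single_of_mem (0 : Fin (n'+1)) (Finset.mem_univ _) ?side]
      · rw [show ((0 : Fin (n'+1)) : ℕ) = 0 from rfl, if_neg (by omega), pow_zero, one_smul,
          sub_zero]
      case side =>
        intro s _ hs
        have h1 : 1 ≤ (s:ℕ) := by
          rcases Nat.eq_zero_or_pos (s:ℕ) with h0 | h0
          · exact absurd (Fin.ext h0 : s = 0) hs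
          · omega
        rw [if_pos h1, sub_self]
    -- push wR ∘ wV through the sum defining h
    let ρ : TruncatedWittVector p (n'+1) L →+ TruncatedWittVector p (n'+1) L :=
      AddMonoidHom.mk' (fun x => wR (wV x)) (fun x y => by rw [wV_add, wR_add])
    have hρ : ∀ x, ρ x = wR (wV x) := fun _ => rfl
    have hRa : wR a = wR b +
        ∑ s : Fin (n'+1), (if 1 ≤ (s:ℕ) then p^((s:ℕ)-1) • wR (wV (f s)) else 0) := by
      rw [hab, wR_add]
      congr 1
      rw [show wR (wV h) = ρ h from rfl, hh, map_sum]
      refine Finset.sum_congr rfl fun s _ => ?_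
      split_ifs with hs
      · rw [map_nsmul, hρ]
      · exact map_zero ρ
    refine ⟨fun s =>
      (if (s:ℕ) = 0 then wR b else 0) +
      (if h2 : (s:ℕ)+1 < n'+1 then wR (wV (f ⟨(s:ℕ)+1, h2⟩)) else 0), fun s => ?_, ?_⟩
    · -- membership
      have hrs : r * p ^ (s:ℕ) ≠ 0 := mul_ne_zero (by omega) (pow_ne_zero _ (by omega))
      refine D.filKM_add hrs ?_ ?_
      · split_ifs with h0
        · have h1 := hf 0
          rw [show ((0 : Fin (n'+1)) : ℕ) = 0 from rfl, pow_zero, mul_one] at h1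
          rw [h0, pow_zero, mul_one]
          rw [← hFb] at h1
          exact D.main0 hr b h1
        · exact D.filKM_zero_mem hrs
      · split_ifs with h2
        · exact D.mainS (by omega) hr (s:ℕ) _ (hf ⟨(s:ℕ)+1, h2⟩)
        · exact D.filKM_zero_mem hrs
    · -- the sum identity
      rw [hRa]
      rw [show (∑ s : Fin (n'+1), p^(s:ℕ) •
          ((if (s:ℕ) = 0 then wR b else 0) +
           (if h2 : (s:ℕ)+1 < n'+1 then wR (wV (f ⟨(s:ℕ)+1, h2⟩)) else 0)))
        = (∑ s : Fin (n'+1), p^(s:ℕ) • (if (s:ℕ) = 0 then wR b else 0))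
          + ∑ s : Fin (n'+1), p^(s:ℕ) •
              (if h2 : (s:ℕ)+1 < n'+1 then wR (wV (f ⟨(s:ℕ)+1, h2⟩)) else 0) from by
        rw [← Finset.sum_add_distrib]
        exact Finset.sum_congr rfl fun s _ => smul_add _ _ _]
      congr 1
      · -- first sum is wR b
        rw [Finset.sum_eq_single_of_mem (0 : Fin (n'+1)) (Finset.mem_univ _) ?side2]
        · rw [show ((0 : Fin (n'+1)) : ℕ) = 0 from rfl, if_pos rfl, pow_zero, one_smul]
        case side2 =>
          intro s _ hs
          have h1 : ¬((s:ℕ) = 0) := fun h0 => hs (Fin.ext h0 : s = 0)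
          rw [if_neg h1, smul_zero]
      · -- second sum, reindexed
        rw [show (∑ s : Fin (n'+1), (if 1 ≤ (s:ℕ) then p^((s:ℕ)-1) • wR (wV (f s)) else 0))
            = ∑ s : Fin (n'+1), (fun i : ℕ => if hin : i < n'+1 then
                (if 1 ≤ i then p^(i-1) • wR (wV (f ⟨i, hin⟩)) else 0) else 0) (s:ℕ) from
          Finset.sum_congr rfl fun s _ => by
            simp only [dif_pos s.isLt, Fin.eta]]
        rw [Fin.sum_univ_eq_sum_range (fun i : ℕ => p^i •
          (if h2 : i+1 < n'+1 then wR (wV (f ⟨i+1, h2⟩)) else 0)) (n'+1)]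
        rw [Fin.sum_univ_eq_sum_range (fun i : ℕ => if hin : i < n'+1 then
                (if 1 ≤ i then p^(i-1) • wR (wV (f ⟨i, hin⟩)) else 0) else 0) (n'+1)]
        rw [Finset.sum_range_succ (fun i : ℕ => p^i •
          (if h2 : i+1 < n'+1 then wR (wV (f ⟨i+1, h2⟩)) else 0)) n']
        rw [Finset.sum_range_succ' (fun i : ℕ => if hin : i < n'+1 then
                (if 1 ≤ i then p^(i-1) • wR (wV (f ⟨i, hin⟩)) else 0) else 0) n']
        rw [dif_neg (lt_irrefl (n'+1)), smul_zero, add_zero,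
          dif_pos (Nat.succ_pos n'), if_neg (by omega), add_zero]
        refine Finset.sum_congr rfl fun i hi => ?_
        rw [Finset.mem_range] at hi
        rw [dif_pos (by omega : i+1 < n'+1), dif_pos (by omega : i+1 < n'+1),
          if_pos (by omega : 1 ≤ i+1), Nat.add_sub_cancel]
  · intro a b hab
    apply TruncatedWittVector.ext
    intro i
    have hcoe := congrArg (fun w : TruncatedWittVector p (n'+1) L =>
      TruncatedWittVector.coeff i w) hab
    simp only [wF, TruncatedWittVector.coeff_mk] at hcoe
    simp only [wR, TruncatedWittVector.coeff_mk]
    exact frobenius_inj L p (by rw [frobenius_def, frobenius_def]; exact hcoe)
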